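/- Let S = (s_1, …, s_n) be any finite list over a type with decidable equality. Then the multiset { c_i : 1 ≤ i ≤ n }, where c_i is the number of occurrences of s_i among s_1, …, s_{i−1}, is equal to the multiset union, over the distinct elements a occurring in S, of the multisets {0, 1, …, occ(a, S) − 1}, where occ(a, S) is the number of occurrences of a in S. -/

import Mathlib

/-- The multiset of "number of previous occurrences" counts `c_i` of a list `S`
equals the disjoint union, over the distinct elements `a` of `S`, of
`{0, 1, …, occ(a,S) − 1}`. -/
theorem prev_occurrence_counts_multiset {α : Type*} [DecidableEq α] (S : List α) :
    (↑(List.ofFn fun i : Fin S.length => (S.take i.val).count (S.get i)) : Multiset ℕ) =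
      ∑ a ∈ S.toFinset, Multiset.range (S.count a) := by
  induction S using List.reverseRecOn with
  | nil => simp
  | append_singleton T a ih =>
    have hlen : (T ++ [a]).length = T.length + 1 := by simp
    have key : (List.ofFn fun i : Fin (T ++ [a]).length =>
          ((T ++ [a]).take i.val).count ((T ++ [a]).get i))
        = (List.ofFn fun i : Fin T.length => (T.take i.val).count (T.get i)) ++ [T.count a] := by
      rw [List.ofFn_congr hlen, List.ofFn_succ']
      simp only [List.concat_eq_append]
      refine congrArg₂ (· ++ ·) (congrArg List.ofFn (funext fun i => ?_)) (congrArg (fun x => [x]) ?_)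
      · have hi : (i : ℕ) < T.length := i.isLt
        simp only [Fin.cast, Fin.castSucc, Fin.castAdd, Fin.castLE, List.get_eq_getElem]
        rw [List.take_append_of_le_length hi.le, List.getElem_append_left hi]
      · simp only [Fin.cast, Fin.last, List.get_eq_getElem]
        rw [List.take_append_of_le_length le_rfl, List.take_length,
          List.getElem_concat_length rfl]
    rw [key, ← Multiset.coe_add, ih]
    have hmem : a ∈ (T ++ [a]).toFinset := by simp
    rw [← Finset.add_sum_erase _ _ hmem]
    have herase : ((T ++ [a]).toFinset).erase a = T.toFinset.erase a := by
      rw [List.toFinset_append]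
      ext x
      simp only [Finset.mem_erase, Finset.mem_union, List.toFinset_cons, List.toFinset_nil,
        Finset.mem_insert, Finset.notMem_empty, or_false, List.mem_toFinset]
      tauto
    have hsum : ∑ x ∈ ((T ++ [a]).toFinset).erase a, Multiset.range ((T ++ [a]).count x)
        = ∑ x ∈ T.toFinset.erase a, Multiset.range (T.count x) := by
      rw [herase]
      apply Finset.sum_congr rfl
      intro x hx
      have hxa : x ≠ a := Finset.ne_of_mem_erase hx
      simp [List.count_append, hxa, List.count_singleton, List.count_cons, Ne.symm hxa]
    have hcount : (T ++ [a]).count a = T.count a + 1 := by simp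
    rw [hsum, hcount, Multiset.range_succ]
    have hT : ∑ x ∈ T.toFinset, Multiset.range (T.count x)
        = Multiset.range (T.count a) + ∑ x ∈ T.toFinset.erase a, Multiset.range (T.count x) := by
      by_cases h : a ∈ T.toFinset
      · rw [← Finset.add_sum_erase _ _ h]
      · rw [Finset.erase_eq_of_notMem h]
        have : T.count a = 0 := by
          simp only [List.count_eq_zero]
          simpa using h
        simp [this]
    rw [hT]
    simp only [← Multiset.singleton_add, Multiset.coe_singleton]
    abel
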